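/- Let K and K' be finite posets with Alexandrov topologies T and T', let f : K → K' be order-preserving, and let V and V' be multivector fields on K and K' respectively. Then the identity map κ : (K, T_{V ⋒ f*(V')}) → (K, T_V) and the map λ = f : (K, T_{V ⋒ f*(V')}) → (K', T'_{V'}) are continuous, where for a multivector field W, T_W denotes the topology T_{M(F_W)} associated with the minimal Morse decomposition M(F_W) of F_W. -/

import Mathlib

/-- The closure `cl σ = {τ : τ ⪯ σ}` of a point of a finite poset (e.g. the set of
faces of a simplex in the face poset of a simplicial complex). -/
def clSet {K : Type*} [PartialOrder K] (σ : K) : Set K := {τ | τ ≤ σ}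

/-- A set `A` is orderly convex if `σ₁ ⪯ τ ⪯ σ₂` with `σ₁, σ₂ ∈ A` implies `τ ∈ A`. -/
def OrderlyConvex {K : Type*} [PartialOrder K] (A : Set K) : Prop :=
  ∀ σ₁ ∈ A, ∀ σ₂ ∈ A, ∀ τ : K, σ₁ ≤ τ → τ ≤ σ₂ → τ ∈ A

/-- A multivector field on `K`: a partition of `K` into orderly convex sets. -/
def IsMVF {K : Type*} [PartialOrder K] (𝒱 : Set (Set K)) : Prop :=
  Setoid.IsPartition 𝒱 ∧ ∀ V ∈ 𝒱, OrderlyConvex V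

/-- `[σ]_𝒱`, the member of the partition `𝒱` containing `σ`. -/
def mvClass {K : Type*} (𝒱 : Set (Set K)) (σ : K) : Set K :=
  {τ | ∃ V ∈ 𝒱, σ ∈ V ∧ τ ∈ V}

/-- The combinatorial dynamical system associated with a multivector field:
`F_𝒱 (σ) = cl σ ∪ [σ]_𝒱`. -/
def mvF {K : Type*} [PartialOrder K] (𝒱 : Set (Set K)) (σ : K) : Set K :=
  clSet σ ∪ mvClass 𝒱 σ

/-- A full solution of `F` in the set `A`. -/
def IsFullSol {X : Type*} (F : X → Set X) (A : Set X) (ρ : ℤ → X) : Prop :=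
  (∀ i, ρ i ∈ A) ∧ ∀ i, ρ (i + 1) ∈ F (ρ i)

/-- `A` is invariant: through every point of `A` passes a full solution in `A`
(a bi-infinite walk of the digraph `G_F` within `A`). -/
def IsInvariantSet {X : Type*} (F : X → Set X) (A : Set X) : Prop :=
  ∀ x ∈ A, ∃ ρ : ℤ → X, IsFullSol F A ρ ∧ ∃ i, ρ i = x

/-- Reachability in the digraph `G_F`. -/
def Reaches {X : Type*} (F : X → Set X) : X → X → Prop :=
  Relation.ReflTransGen fun a b => b ∈ F a

/-- `S` is a strongly connected component of `G_F`. -/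
def IsSCC {X : Type*} (F : X → Set X) (S : Set X) : Prop :=
  ∃ x, S = {y | Reaches F x y ∧ Reaches F y x}

/-- The minimal Morse decomposition of `F`: the family of all invariant strongly
connected components of `G_F`. -/
def minMorse {X : Type*} (F : X → Set X) : Set (Set X) :=
  {S | IsSCC F S ∧ IsInvariantSet F S}

/-- `𝒱 ⋒ 𝒲`: the family of non-empty intersections `V ∩ W`, `V ∈ 𝒱`, `W ∈ 𝒲`. -/
def interMVF {K : Type*} (𝒱 𝒲 : Set (Set K)) : Set (Set K) :=
  {A | ∃ V ∈ 𝒱, ∃ W ∈ 𝒲, A = V ∩ W ∧ A.Nonempty}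

/-- The pullback `f*(𝒱') = {f⁻¹(V') : V' ∈ 𝒱', f⁻¹(V') ≠ ∅}` of a multivector
field along a map `f`. -/
def pullbackMVF {K K' : Type*} (f : K → K') (𝒱' : Set (Set K')) : Set (Set K) :=
  {A | ∃ V' ∈ 𝒱', A = f ⁻¹' V' ∧ A.Nonempty}

/-- The Alexandrov topology of a poset: the open sets are the up-sets. -/
def alexandrovTop (K : Type*) [PartialOrder K] : TopologicalSpace K where
  IsOpen U := IsUpperSet U
  isOpen_univ := isUpperSet_univ
  isOpen_inter := fun _ _ hs ht => hs.inter ht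
  isOpen_sUnion := fun _ hS => isUpperSet_sUnion hS

/-- The topology `T_𝒜 = (𝒜 ⋒ t)*` on `K` generated by the family
`{A ∩ U : A ∈ 𝒜, U ∈ t}` (used for families `𝒜` covering `K`, such as minimal
Morse decompositions of multivector fields). -/
def piecedTopFull {X : Type*} (t : TopologicalSpace X) (𝒜 : Set (Set X)) :
    TopologicalSpace X :=
  TopologicalSpace.generateFrom {S | ∃ A ∈ 𝒜, ∃ U : Set X, t.IsOpen U ∧ S = A ∩ U}

/-- The topology `T_𝒱` of the minimal Morse decomposition of the multivector
field `𝒱` on a poset with its Alexandrov topology. -/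
def morseTop {K : Type*} [PartialOrder K] (𝒱 : Set (Set K)) : TopologicalSpace K :=
  piecedTopFull (alexandrovTop K) (minMorse (mvF 𝒱))

/-- The strongly connected component of `x` in the digraph of `F`. -/
def sccOf {X : Type*} (F : X → Set X) (x : X) : Set X :=
  {y | Reaches F x y ∧ Reaches F y x}

lemma self_mem_mvF {K : Type*} [PartialOrder K] (𝒱 : Set (Set K)) (σ : K) :
    σ ∈ mvF 𝒱 σ := Or.inl (le_refl σ)

lemma mem_sccOf_self {X : Type*} (F : X → Set X) (x : X) : x ∈ sccOf F x :=
  ⟨Relation.ReflTransGen.refl, Relation.ReflTransGen.refl⟩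

lemma sccOf_mem_minMorse {K : Type*} [PartialOrder K] (𝒱 : Set (Set K)) (x : K) :
    sccOf (mvF 𝒱) x ∈ minMorse (mvF 𝒱) := by
  refine ⟨⟨x, rfl⟩, fun y hy => ?_⟩
  exact ⟨fun _ => y, ⟨fun _ => hy, fun _ => self_mem_mvF 𝒱 y⟩, 0, rfl⟩

lemma minMorse_eq_sccOf {X : Type*} (F : X → Set X) {A : Set X}
    (hA : A ∈ minMorse F) {x : X} (hx : x ∈ A) : A = sccOf F x := by
  obtain ⟨⟨z, rfl⟩, -⟩ := hA
  ext y
  exact ⟨fun h => ⟨hx.2.trans h.1, h.2.trans hx.1⟩,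
    fun h => ⟨hx.1.trans h.1, h.2.trans hx.2⟩⟩

lemma mvF_inter_subset {K K' : Type*} [PartialOrder K] (f : K → K')
    (𝒱 : Set (Set K)) (𝒱' : Set (Set K')) (σ : K) :
    mvF (interMVF 𝒱 (pullbackMVF f 𝒱')) σ ⊆ mvF 𝒱 σ := by
  rintro τ (h | ⟨W, ⟨V, hV, P, hP, rfl, -⟩, hσ, hτ⟩)
  · exact Or.inl h
  · exact Or.inr ⟨V, hV, hσ.1, hτ.1⟩

lemma mvF_map {K K' : Type*} [PartialOrder K] [PartialOrder K'] {f : K → K'}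
    (hf : Monotone f) (𝒱 : Set (Set K)) (𝒱' : Set (Set K')) {σ τ : K}
    (h : τ ∈ mvF (interMVF 𝒱 (pullbackMVF f 𝒱')) σ) : f τ ∈ mvF 𝒱' (f σ) := by
  rcases h with h | ⟨W, ⟨V, hV, P, ⟨V', hV', rfl, -⟩, rfl, -⟩, hσ, hτ⟩
  · exact Or.inl (hf h)
  · exact Or.inr ⟨V', hV', hσ.2, hτ.2⟩

lemma reaches_mono {K K' : Type*} [PartialOrder K] (f : K → K')
    (𝒱 : Set (Set K)) (𝒱' : Set (Set K')) {x y : K}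
    (h : Reaches (mvF (interMVF 𝒱 (pullbackMVF f 𝒱'))) x y) :
    Reaches (mvF 𝒱) x y :=
  Relation.ReflTransGen.mono (fun a b hab => mvF_inter_subset f 𝒱 𝒱' a hab) _ _ h

lemma reaches_map {K K' : Type*} [PartialOrder K] [PartialOrder K'] {f : K → K'}
    (hf : Monotone f) (𝒱 : Set (Set K)) (𝒱' : Set (Set K')) {x y : K}
    (h : Reaches (mvF (interMVF 𝒱 (pullbackMVF f 𝒱'))) x y) :
    Reaches (mvF 𝒱') (f x) (f y) :=
  Relation.ReflTransGen.lift (p := fun a b => b ∈ mvF 𝒱' a) f (fun _ _ hab => mvF_map hf 𝒱 𝒱' hab) _ _ h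

/-- For an order-preserving `f : K → K'` and multivector fields `𝒱` on `K`, `𝒱'` on
`K'`, the identity map `κ : (K, T_{𝒱 ⋒ f*(𝒱')}) → (K, T_𝒱)` and the map
`λ = f : (K, T_{𝒱 ⋒ f*(𝒱')}) → (K', T'_{𝒱'})` are continuous, where `T_𝒲` denotes
the topology associated with the minimal Morse decomposition of `F_𝒲`. -/
theorem comparison_diagram_continuous
    {K K' : Type*} [PartialOrder K] [Finite K] [PartialOrder K'] [Finite K']
    (f : K → K') (hf : Monotone f)
    (𝒱 : Set (Set K)) (𝒱' : Set (Set K'))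
    (h𝒱 : IsMVF 𝒱) (h𝒱' : IsMVF 𝒱') :
    @Continuous K K (morseTop (interMVF 𝒱 (pullbackMVF f 𝒱'))) (morseTop 𝒱)
      (fun σ => σ) ∧
    @Continuous K K' (morseTop (interMVF 𝒱 (pullbackMVF f 𝒱'))) (morseTop 𝒱') f := by
  set 𝒲 := interMVF 𝒱 (pullbackMVF f 𝒱') with h𝒲
  letI tW : TopologicalSpace K := morseTop 𝒲
  constructor
  · rw [morseTop.eq_1 𝒱, piecedTopFull, continuous_generateFrom_iff]
    rintro S ⟨A, hA, U, hU, rfl⟩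
    have key : (fun σ : K => σ) ⁻¹' (A ∩ U) =
        ⋃₀ {T | ∃ x ∈ A ∩ U, T = sccOf (mvF 𝒲) x ∩ U} := by
      ext y
      constructor
      · intro hy
        exact ⟨_, ⟨y, hy, rfl⟩, mem_sccOf_self _ y, hy.2⟩
      · rintro ⟨T, ⟨x, hx, rfl⟩, hy1, hy2⟩
        refine ⟨?_, hy2⟩
        rw [minMorse_eq_sccOf (mvF 𝒱) hA hx.1]
        exact ⟨reaches_mono f 𝒱 𝒱' hy1.1, reaches_mono f 𝒱 𝒱' hy1.2⟩
    rw [key]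
    refine TopologicalSpace.GenerateOpen.sUnion _ ?_
    rintro T ⟨x, hx, rfl⟩
    exact TopologicalSpace.GenerateOpen.basic _
      ⟨sccOf (mvF 𝒲) x, sccOf_mem_minMorse 𝒲 x, U, hU, rfl⟩
  · rw [morseTop.eq_1 𝒱', piecedTopFull, continuous_generateFrom_iff]
    rintro S ⟨A', hA', U', hU', rfl⟩
    have key : f ⁻¹' (A' ∩ U') =
        ⋃₀ {T | ∃ x ∈ f ⁻¹' (A' ∩ U'), T = sccOf (mvF 𝒲) x ∩ f ⁻¹' U'} := by
      ext y
      constructor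
      · intro hy
        exact ⟨_, ⟨y, hy, rfl⟩, mem_sccOf_self _ y, hy.2⟩
      · rintro ⟨T, ⟨x, hx, rfl⟩, hy1, hy2⟩
        refine ⟨?_, hy2⟩
        show f y ∈ A'
        rw [minMorse_eq_sccOf (mvF 𝒱') hA' hx.1]
        exact ⟨reaches_map hf 𝒱 𝒱' hy1.1, reaches_map hf 𝒱 𝒱' hy1.2⟩
    rw [key]
    refine TopologicalSpace.GenerateOpen.sUnion _ ?_
    rintro T ⟨x, hx, rfl⟩
    refine TopologicalSpace.GenerateOpen.basic _
      ⟨sccOf (mvF 𝒲) x, sccOf_mem_minMorse 𝒲 x, f ⁻¹' U', ?_, rfl⟩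
    exact fun a b hab h => hU' (hf hab) h
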